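/- Let K be a quadratic field and let c ∈ K be such that the map f_c(z) = z² + c has exactly one fixed point in K. Then c = 1/4, and the set of preperiodic points of f_{1/4} in K equals the intersection of K with the eight-element set {1/2, −1/2, (i√3)/2, −(i√3)/2, 1/2 + i, 1/2 − i, −1/2 + i, −1/2 − i}. -/

import Mathlib

private noncomputable def gC : ℂ → ℂ := fun z => z ^ 2 + z
private noncomputable def fC : ℂ → ℂ := fun z => z ^ 2 + 1 / 4

private lemma growth {z : ℂ} (hz : 2 < ‖z‖) :
    2 < ‖gC z‖ ∧ ‖z‖ < ‖gC z‖ := by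
  have h1 : ‖z ^ 2‖ - ‖z‖ ≤ ‖z ^ 2 + z‖ := by
    have := norm_sub_norm_le (z ^ 2) (-z)
    simpa [sub_neg_eq_add] using this
  have h2 : ‖z ^ 2‖ = ‖z‖ ^ 2 := by
    simp [map_pow]
  have h0 : (0:ℝ) ≤ ‖z‖ := norm_nonneg z
  constructor
  · show 2 < ‖z ^ 2 + z‖
    nlinarith [h1, h2]
  · show ‖z‖ < ‖z ^ 2 + z‖
    nlinarith [h1, h2]

private lemma bounded {z : ℂ} {m n : ℕ} (hmn : m < n) (h : gC^[m] z = gC^[n] z) :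
    ∀ k, ‖gC^[k] z‖ ≤ 2 := by
  by_contra hc
  push_neg at hc
  obtain ⟨K, hK⟩ := hc
  have key : ∀ i : ℕ, 2 < ‖gC^[K + i] z‖ ∧
      ‖gC^[K + i] z‖ < ‖gC^[K + (i+1)] z‖ := by
    intro i
    induction i with
    | zero =>
      refine ⟨by simpa using hK, ?_⟩
      have : gC^[K + 1] z = gC (gC^[K] z) := by
        rw [Nat.add_comm, Function.iterate_add_apply, Function.iterate_one]
      rw [this]
      exact (growth (by simpa using hK)).2
    | succ i ih =>
      have h2 : 2 < ‖gC^[K + (i+1)] z‖ := lt_trans ih.1 ih.2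
      refine ⟨h2, ?_⟩
      have : gC^[K + (i + 1 + 1)] z = gC (gC^[K + (i+1)] z) := by
        rw [show K + (i + 1 + 1) = 1 + (K + (i+1)) by ring, Function.iterate_add_apply,
          Function.iterate_one]
      rw [this]
      exact (growth h2).2
  have mono : StrictMono (fun i => ‖gC^[K + i] z‖) :=
    strictMono_nat_of_lt_succ (fun i => (key i).2)
  have heq : gC^[K + m] z = gC^[K + n] z := by
    rw [Function.iterate_add_apply gC K m, Function.iterate_add_apply gC K n, h]
  have h2 := mono hmn
  simp only at h2
  rw [heq] at h2
  exact lt_irrefl _ h2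

private def FZ : ℤ × ℤ → ℤ × ℤ := fun p => (p.1 ^ 2 + p.1 - 2 * p.2, p.2 * (p.2 + p.1 + 1))

private def inBox (p : ℤ × ℤ) : Prop := -4 ≤ p.1 ∧ p.1 ≤ 4 ∧ -4 ≤ p.2 ∧ p.2 ≤ 4

private instance : DecidablePred inBox := fun p => by unfold inBox; infer_instance

private lemma surviving : ∀ s ∈ Finset.Icc (-4:ℤ) 4, ∀ m ∈ Finset.Icc (-4:ℤ) 4,
    inBox (FZ (s, m)) → inBox (FZ (FZ (s, m))) → inBox (FZ (FZ (FZ (s, m)))) →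
    (s, m) = ((0:ℤ), (0:ℤ)) ∨ (s, m) = (-1, 0) ∨ (s, m) = (-2, 1) ∨
      (s, m) = (-1, 1) ∨ (s, m) = (0, 1) ∨ (s, m) = (-2, 2) := by decide

private def FQ : ℚ × ℚ → ℚ × ℚ := fun p => (p.1 ^ 2 + p.1 - 2 * p.2, p.2 * (p.2 + p.1 + 1))

section padic
variable {p : ℕ} [hp : Fact p.Prime]

private lemma pn_two_le_one : padicNorm p (2 : ℚ) ≤ 1 := by
  simpa using padicNorm.of_int (p := p) 2

private lemma step_max {s m : ℚ} (h : 1 < max (padicNorm p s) (padicNorm p m)) :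
    max (padicNorm p s) (padicNorm p m) ^ 2 ≤
      max (padicNorm p (FQ (s, m)).1) (padicNorm p (FQ (s, m)).2) := by
  set c := padicNorm p s with hc
  set d := padicNorm p m with hd
  have hc0 : 0 ≤ c := padicNorm.nonneg s
  have hd0 : 0 ≤ d := padicNorm.nonneg m
  have h2m : padicNorm p (2 * m) ≤ d := by
    rw [padicNorm.mul]
    exact mul_le_of_le_one_left hd0 pn_two_le_one
  rcases lt_or_ge c d with hcd | hdc
  · have hd1 : 1 < d := by rw [max_eq_right hcd.le] at h; exact h
    have hs1 : padicNorm p (s + 1) < d := by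
      calc padicNorm p (s + 1) ≤ max c (padicNorm p (1:ℚ)) := padicNorm.nonarchimedean
        _ ≤ max c 1 := by rw [padicNorm.one]
        _ < d := max_lt hcd hd1
    have hmsum : padicNorm p (m + s + 1) = d := by
      have e : m + s + 1 = m + (s + 1) := by ring
      rw [e, padicNorm.add_eq_max_of_ne (ne_of_gt hs1)]
      exact max_eq_left hs1.le
    have : padicNorm p (FQ (s, m)).2 = d ^ 2 := by
      show padicNorm p (m * (m + s + 1)) = d ^ 2
      rw [padicNorm.mul, hmsum, sq]
    rw [max_eq_right hcd.le]
    rw [← this]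
    exact le_max_right _ _
  · have hc1 : 1 < c := by rw [max_eq_left hdc] at h; exact h
    have hrest : padicNorm p (s - 2 * m) < c ^ 2 := by
      calc padicNorm p (s - 2 * m) ≤ max c (padicNorm p (2 * m)) := padicNorm.sub
        _ ≤ max c d := max_le_max le_rfl h2m
        _ = c := max_eq_left hdc
        _ < c ^ 2 := by nlinarith
    have hs2 : padicNorm p (s ^ 2) = c ^ 2 := by rw [sq, padicNorm.mul, sq]
    have hfirst : padicNorm p (FQ (s, m)).1 = c ^ 2 := by
      show padicNorm p (s ^ 2 + s - 2 * m) = c ^ 2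
      have e : s ^ 2 + s - 2 * m = s ^ 2 + (s - 2 * m) := by ring
      rw [e]
      rw [padicNorm.add_eq_max_of_ne (by rw [hs2]; exact (ne_of_lt hrest).symm), hs2]
      exact max_eq_left hrest.le
    rw [max_eq_left hdc, ← hfirst]
    exact le_max_left _ _

end padic

private lemma pair_int {q r : ℚ} {m n : ℕ} (hmn : m < n) (h : FQ^[m] (q, r) = FQ^[n] (q, r)) :
    ∃ a b : ℤ, q = (a : ℚ) ∧ r = (b : ℚ) := by
  have hmax : ∀ p : ℕ, p.Prime → max (padicNorm p q) (padicNorm p r) ≤ 1 := by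
    intro p pp
    haveI : Fact p.Prime := ⟨pp⟩
    by_contra hgt
    push_neg at hgt
    set M : ℕ → ℚ := fun k => max (padicNorm p (FQ^[k] (q, r)).1) (padicNorm p (FQ^[k] (q, r)).2)
      with hM
    have hM0 : 1 < M 0 := by simpa [hM] using hgt
    have hstep : ∀ k, 1 < M k → M k ^ 2 ≤ M (k + 1) := by
      intro k hk
      have : FQ^[k + 1] (q, r) = FQ (FQ^[k] (q, r)) := Function.iterate_succ_apply' _ _ _
      simp only [hM, this]
      exact step_max hk
    have hgt1 : ∀ k, 1 < M k := by
      intro k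
      induction k with
      | zero => exact hM0
      | succ k ih => have := hstep k ih; nlinarith
    have hmono : StrictMono M := by
      apply strictMono_nat_of_lt_succ
      intro k
      have h1 := hgt1 k
      have h2 := hstep k h1
      nlinarith
    have : M m = M n := by simp only [hM, h]
    exact ne_of_lt (hmono hmn) this
  have key : ∀ t : ℚ, (∀ p : ℕ, p.Prime → padicNorm p t ≤ 1) → ∃ a : ℤ, t = (a : ℚ) := by
    intro t ht
    refine ⟨t.num, ?_⟩
    have hden : t.den = 1 := by
      by_contra hd
      set p := t.den.minFac with hpdef
      have pp : p.Prime := Nat.minFac_prime hd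
      have hdvd : p ∣ t.den := Nat.minFac_dvd _
      have ht0 : t ≠ 0 := by
        intro h0
        rw [h0] at hd
        exact hd rfl
      haveI : Fact p.Prime := ⟨pp⟩
      have hnum : ¬ (p : ℤ) ∣ t.num := by
        intro hdn
        have : p ∣ t.num.natAbs := Int.natCast_dvd_natCast.mp (by simpa using Int.dvd_natAbs.mpr hdn)
        have := Nat.Coprime.eq_one_of_dvd (t.reduced.coprime_dvd_left this) hdvd
        exact pp.one_lt.ne' this
      have hvint : padicValInt p t.num = 0 := padicValInt.eq_zero_of_not_dvd hnum
      have hvden : 1 ≤ padicValNat p t.den :=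
        one_le_padicValNat_of_dvd t.den_pos.ne' hdvd
      have hv : padicValRat p t ≤ -1 := by
        unfold padicValRat
        omega
      have hlt : 1 < padicNorm p t := by
        rw [padicNorm.eq_zpow_of_nonzero ht0]
        have hp1 : (1:ℚ) < (p:ℚ) := by exact_mod_cast pp.one_lt
        calc (1:ℚ) < (p:ℚ) ^ (1:ℤ) := by simpa using hp1
          _ ≤ (p:ℚ) ^ (-padicValRat p t) := by
            apply zpow_le_zpow_right₀ hp1.le
            omega
      exact absurd (ht p pp) (not_le.mpr hlt)
    exact ((Rat.den_eq_one_iff t).mp hden).symm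
  obtain ⟨a, ha⟩ := key q (fun p pp => le_trans (le_max_left _ _) (hmax p pp))
  obtain ⟨b, hb⟩ := key r (fun p pp => le_trans (le_max_right _ _) (hmax p pp))
  exact ⟨a, b, ha, hb⟩

private lemma map_iter {K : IntermediateField ℚ ℂ} (ψ : ↥K →ₐ[ℚ] ℂ) (w : ↥K) (k : ℕ) :
    ψ ((fun z : ↥K => z ^ 2 + z)^[k] w) = gC^[k] (ψ w) := by
  induction k with
  | zero => simp
  | succ k ih =>
    rw [Function.iterate_succ_apply', Function.iterate_succ_apply', ← ih]
    simp [gC, map_add, map_pow]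

private lemma coe_iter {K : IntermediateField ℚ ℂ} (x : ↥K) (k : ℕ) :
    (((fun z : ↥K => z ^ 2 + 1 / 4)^[k] x : ↥K) : ℂ) = fC^[k] (x : ℂ) := by
  induction k with
  | zero => simp
  | succ k ih =>
    rw [Function.iterate_succ_apply', Function.iterate_succ_apply', ← ih]
    show (((((fun z : ↥K => z ^ 2 + 1 / 4)^[k] x : ↥K) ^ 2 + 1/4 : ↥K)) : ℂ) = _
    push_cast
    rfl

private lemma conj_iter {K : IntermediateField ℚ ℂ} (x : ↥K) (k : ℕ) :
    (fun z : ↥K => z ^ 2 + 1 / 4)^[k] x = (fun z : ↥K => z ^ 2 + z)^[k] (x - 1/2) + 1/2 := by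
  induction k with
  | zero => simp
  | succ k ih =>
    rw [Function.iterate_succ_apply', Function.iterate_succ_apply', ih]
    ring

set_option maxHeartbeats 2000000 in
/-- If `K` is a quadratic field and `c ∈ K` is such that `f_c(z) = z² + c` has exactly one
fixed point in `K`, then `c = 1/4` and the set of `K`-rational preperiodic points of
`f_{1/4}` is the intersection of `K` with the eight-element set
`{±1/2, ±i√3/2, ±1/2 ± i}`. -/
theorem unique_fixed_point_classification (K : IntermediateField ℚ ℂ)
    (hK : Module.finrank ℚ K = 2) (c : K)
    (hfix : ∃! x : K, x ^ 2 + c = x) :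
    c = 1 / 4 ∧
      ∀ x : K,
        (∃ m n : ℕ, m < n ∧
            (fun z : K => z ^ 2 + 1 / 4)^[m] x = (fun z : K => z ^ 2 + 1 / 4)^[n] x) ↔
          (x : ℂ) ∈ ({1 / 2, -(1 / 2),
            Complex.I * Real.sqrt 3 / 2, -(Complex.I * Real.sqrt 3 / 2),
            1 / 2 + Complex.I, 1 / 2 - Complex.I,
            -(1 / 2) + Complex.I, -(1 / 2) - Complex.I} : Set ℂ) := by
  classical
  obtain ⟨x₀, hx₀, huniq⟩ := hfix
  have hx1 : (1 - x₀) ^ 2 + c = 1 - x₀ := by linear_combination hx₀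
  have hfixeq := huniq _ hx1
  have hhalf : x₀ = 1/2 := by linear_combination (-1/2 : ↥K) * hfixeq
  have hc : c = 1 / 4 := by linear_combination hx₀ - (x₀ - 1/2) * hhalf
  refine ⟨hc, ?_⟩
  intro x
  -- basic complex facts
  set r : ℂ := ((Real.sqrt 3 : ℝ) : ℂ) with hrdef
  have hr : r ^ 2 = 3 := by
    rw [hrdef]
    norm_cast
    rw [Real.sq_sqrt]
    norm_num
  have hI := Complex.I_sq
  constructor
  · -- forward direction
    intro hpre
    obtain ⟨m, n, hmn, hiter⟩ := hpre
    haveI : FiniteDimensional ℚ K := Module.finite_of_finrank_eq_succ (n := 1) (by rw [hK])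
    set w : ↥K := x - 1/2 with hwdef
    have hgK : (fun z : ↥K => z ^ 2 + z)^[m] w = (fun z : ↥K => z ^ 2 + z)^[n] w := by
      rw [conj_iter, conj_iter] at hiter
      exact add_right_cancel hiter
    -- the two embeddings
    have hcard : Fintype.card (↥K →ₐ[ℚ] ℂ) = 2 := by rw [AlgHom.card]; exact hK
    obtain ⟨a, b, hab⟩ :=
      Fintype.exists_pair_of_one_lt_card (α := ↥K →ₐ[ℚ] ℂ) (by rw [hcard]; norm_num)
    have huniv : (Finset.univ : Finset (↥K →ₐ[ℚ] ℂ)) = {a, b} :=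
      (Finset.eq_univ_of_card {a, b} (by rw [Finset.card_pair hab, hcard])).symm
    set t : ℚ := Algebra.trace ℚ (↥K) w with htdef
    set nm : ℚ := Algebra.norm ℚ (w : ↥K) with hnmdef
    have ht : (t : ℂ) = a w + b w := by
      have h := trace_eq_sum_embeddings (K := ℚ) (L := ↥K) ℂ (x := w)
      rw [huniv, Finset.sum_pair hab] at h
      rw [htdef, ← h, eq_ratCast (algebraMap ℚ ℂ)]
    have hn : (nm : ℂ) = a w * b w := by
      have h := Algebra.norm_eq_prod_embeddings (K := ℚ) (L := ↥K) ℂ w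
      rw [huniv, Finset.prod_pair hab] at h
      rw [hnmdef, ← h, eq_ratCast (algebraMap ℚ ℂ)]
    -- bounds on every embedding of every point of the orbit
    have hb : ∀ (ψ : ↥K →ₐ[ℚ] ℂ) (k : ℕ), ‖gC^[k] (ψ w)‖ ≤ 2 := by
      intro ψ
      refine bounded hmn ?_
      rw [← map_iter, ← map_iter, hgK]
    -- the rational pair sequence matches trace/norm of the orbit
    have hpair : ∀ k : ℕ, ((FQ^[k] (t, nm)).1 : ℂ) = gC^[k] (a w) + gC^[k] (b w) ∧
        ((FQ^[k] (t, nm)).2 : ℂ) = gC^[k] (a w) * gC^[k] (b w) := by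
      intro k
      induction k with
      | zero => simpa using ⟨ht, hn⟩
      | succ k ih =>
        obtain ⟨ih1, ih2⟩ := ih
        rw [Function.iterate_succ_apply' FQ, Function.iterate_succ_apply' gC,
          Function.iterate_succ_apply' gC]
        constructor
        · show (((FQ^[k] (t, nm)).1 ^ 2 + (FQ^[k] (t, nm)).1 - 2 * (FQ^[k] (t, nm)).2 : ℚ) : ℂ) = _
          push_cast
          rw [ih1, ih2]
          show _ = (gC^[k] (a w)) ^ 2 + gC^[k] (a w) + ((gC^[k] (b w)) ^ 2 + gC^[k] (b w))
          ring
        · show (((FQ^[k] (t, nm)).2 * ((FQ^[k] (t, nm)).2 + (FQ^[k] (t, nm)).1 + 1) : ℚ) : ℂ) = _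
          push_cast
          rw [ih1, ih2]
          show _ = ((gC^[k] (a w)) ^ 2 + gC^[k] (a w)) * ((gC^[k] (b w)) ^ 2 + gC^[k] (b w))
          ring
    -- the rational pair sequence is preperiodic
    have hCa : gC^[m] (a w) = gC^[n] (a w) := by rw [← map_iter, ← map_iter, hgK]
    have hCb : gC^[m] (b w) = gC^[n] (b w) := by rw [← map_iter, ← map_iter, hgK]
    have hQper : FQ^[m] (t, nm) = FQ^[n] (t, nm) := by
      apply Prod.ext
      · apply Rat.cast_injective (α := ℂ)
        rw [(hpair m).1, (hpair n).1, hCa, hCb]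
      · apply Rat.cast_injective (α := ℂ)
        rw [(hpair m).2, (hpair n).2, hCa, hCb]
    obtain ⟨A, B, hA, hB⟩ := pair_int hmn hQper
    -- integer pair sequence
    have hcastFQ : ∀ q : ℤ × ℤ, FQ ((q.1 : ℚ), (q.2 : ℚ)) = (((FZ q).1 : ℚ), ((FZ q).2 : ℚ)) := by
      intro q
      show ((q.1:ℚ) ^ 2 + (q.1:ℚ) - 2 * (q.2:ℚ), (q.2:ℚ) * ((q.2:ℚ) + (q.1:ℚ) + 1)) = _
      show _ = (((q.1 ^ 2 + q.1 - 2 * q.2 : ℤ) : ℚ), ((q.2 * (q.2 + q.1 + 1) : ℤ) : ℚ))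
      push_cast
      rfl
    have hcast : ∀ k : ℕ, FQ^[k] (t, nm) = (((FZ^[k] (A, B)).1 : ℚ), ((FZ^[k] (A, B)).2 : ℚ)) := by
      intro k
      induction k with
      | zero => simp [hA, hB]
      | succ k ih =>
        rw [Function.iterate_succ_apply' FQ, Function.iterate_succ_apply' FZ, ih, hcastFQ]
    -- bounds: integer pair sequence stays in box
    have habs : ∀ k : ℕ, inBox (FZ^[k] (A, B)) := by
      intro k
      have h1 := (hpair k).1
      have h2 := (hpair k).2
      rw [hcast k] at h1 h2
      have hu := hb a k
      have hv := hb b k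
      have e1 : ‖((FZ^[k] (A, B)).1 : ℂ)‖ ≤ 4 := by
        have : (((FZ^[k] (A, B)).1 : ℚ) : ℂ) = (((FZ^[k] (A, B)).1 : ℤ) : ℂ) := by push_cast; rfl
        rw [← this, h1]
        calc ‖gC^[k] (a w) + gC^[k] (b w)‖ ≤
              ‖gC^[k] (a w)‖ + ‖gC^[k] (b w)‖ := norm_add_le _ _
          _ ≤ 4 := by linarith
      have e2 : ‖((FZ^[k] (A, B)).2 : ℂ)‖ ≤ 4 := by
        have : (((FZ^[k] (A, B)).2 : ℚ) : ℂ) = (((FZ^[k] (A, B)).2 : ℤ) : ℂ) := by push_cast; rfl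
        rw [← this, h2]
        rw [norm_mul]
        calc ‖gC^[k] (a w)‖ * ‖gC^[k] (b w)‖ ≤ 2 * 2 := by
              apply mul_le_mul hu hv (norm_nonneg _) (by norm_num)
          _ = 4 := by norm_num
      rw [Complex.norm_intCast] at e1 e2
      rw [← Int.cast_abs] at e1 e2
      have f1 : |(FZ^[k] (A, B)).1| ≤ 4 := by exact_mod_cast e1
      have f2 : |(FZ^[k] (A, B)).2| ≤ 4 := by exact_mod_cast e2
      rw [abs_le] at f1 f2
      exact ⟨f1.1, f1.2, f2.1, f2.2⟩
    -- apply the finite search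
    have hbox0 := habs 0
    have hbox1 : inBox (FZ (A, B)) := by
      have := habs 1; rwa [Function.iterate_one] at this
    have hbox2 : inBox (FZ (FZ (A, B))) := by
      have := habs 2
      rwa [show (2:ℕ) = 1+1 from rfl, Function.iterate_add_apply, Function.iterate_one] at this
    have hbox3 : inBox (FZ (FZ (FZ (A, B)))) := by
      have := habs 3
      rwa [show (3:ℕ) = 1+(1+1) from rfl, Function.iterate_add_apply, Function.iterate_add_apply,
        Function.iterate_one] at this
    have hbox0' : inBox ((A, B)) := by simpa using hbox0
    have hsurv := surviving A (Finset.mem_Icc.mpr ⟨hbox0'.1, hbox0'.2.1⟩)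
      B (Finset.mem_Icc.mpr ⟨hbox0'.2.2.1, hbox0'.2.2.2⟩) hbox1 hbox2 hbox3
    -- the element satisfies the quadratic equation
    set wc : ℂ := (x : ℂ) - 1/2 with hwc
    have hvalmem : (IsScalarTower.toAlgHom ℚ (↥K) ℂ) = a ∨ (IsScalarTower.toAlgHom ℚ (↥K) ℂ) = b := by
      have : (IsScalarTower.toAlgHom ℚ (↥K) ℂ) ∈ (Finset.univ : Finset (↥K →ₐ[ℚ] ℂ)) := Finset.mem_univ _
      rw [huniv, Finset.mem_insert, Finset.mem_singleton] at this
      exact this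
    have h12 : ((1/2 : ↥K) : ℂ) = 1/2 := by
      show (K.val (1/2) : ℂ) = 1/2
      rw [map_div₀, map_one, map_ofNat]
    have hvalw : (IsScalarTower.toAlgHom ℚ (↥K) ℂ) w = wc := by
      show ((w : ↥K) : ℂ) = wc
      rw [hwdef, hwc]
      push_cast [h12]
      ring
    have hwmem : wc = a w ∨ wc = b w := by
      rcases hvalmem with h | h
      · left; rw [← h, hvalw]
      · right; rw [← h, hvalw]
    have quad : wc ^ 2 = ((A : ℂ)) * wc - (B : ℂ) := by
      have hAt : (t : ℂ) = (A : ℂ) := by rw [hA]; push_cast; rfl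
      have hBn : (nm : ℂ) = (B : ℂ) := by rw [hB]; push_cast; rfl
      rcases hwmem with h | h
      · rw [h, ← hAt, ← hBn, ht, hn]; ring
      · rw [h, ← hAt, ← hBn, ht, hn]; ring
    -- finish in each case
    have hxwc : (x : ℂ) = wc + 1/2 := by rw [hwc]; ring
    simp only [Set.mem_insert_iff, Set.mem_singleton_iff]
    rcases hsurv with h | h | h | h | h | h
    all_goals (
      obtain ⟨hA', hB'⟩ := Prod.ext_iff.mp h
      simp only at hA' hB'
      rw [hA', hB'] at quad
      push_cast at quad)
    · -- (0,0) : wc = 0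
      have : wc = 0 := by
        have h0 : wc ^ 2 = 0 := by linear_combination quad
        exact pow_eq_zero_iff (n := 2) (by norm_num) |>.mp h0
      left
      rw [hxwc, this]; ring
    · -- (-1,0) : wc = 0 or wc = -1
      have h0 : wc * (wc + 1) = 0 := by linear_combination quad
      rcases mul_eq_zero.mp h0 with h1 | h1
      · left; rw [hxwc, h1]; ring
      · right; left
        have : wc = -1 := by linear_combination h1
        rw [hxwc, this]; ring
    · -- (-2,1) : wc = -1
      have h0 : (wc + 1) ^ 2 = 0 := by linear_combination quad
      have h1 : wc = -1 := by
        have := pow_eq_zero_iff (n := 2) (by norm_num) |>.mp h0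
        linear_combination this
      right; left
      rw [hxwc, h1]; ring
    · -- (-1,1) : wc = (-1 ± I√3)/2
      have h0 : (2 * wc + 1 - Complex.I * r) * (2 * wc + 1 + Complex.I * r) = 0 := by
        linear_combination 4 * quad - r^2 * hI + hr
      rcases mul_eq_zero.mp h0 with h1 | h1
      · right; right; left
        rw [hxwc]
        have : wc = (-1 + Complex.I * r) / 2 := by linear_combination h1 / 2
        rw [this]; ring
      · right; right; right; left
        rw [hxwc]
        have : wc = (-1 - Complex.I * r) / 2 := by linear_combination h1 / 2
        rw [this]; ring
    · -- (0,1) : wc = ± I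
      have h0 : (wc - Complex.I) * (wc + Complex.I) = 0 := by
        linear_combination quad - hI
      rcases mul_eq_zero.mp h0 with h1 | h1
      · right; right; right; right; left
        have : wc = Complex.I := by linear_combination h1
        rw [hxwc, this]; ring
      · right; right; right; right; right; left
        have : wc = -Complex.I := by linear_combination h1
        rw [hxwc, this]; ring
    · -- (-2,2) : wc = -1 ± I
      have h0 : (wc + 1 - Complex.I) * (wc + 1 + Complex.I) = 0 := by
        linear_combination quad - hI
      rcases mul_eq_zero.mp h0 with h1 | h1
      · right; right; right; right; right; right; left
        have : wc = -1 + Complex.I := by linear_combination h1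
        rw [hxwc, this]; ring
      · right; right; right; right; right; right; right
        have : wc = -1 - Complex.I := by linear_combination h1
        rw [hxwc, this]; ring
  · -- reverse direction
    intro hmem
    have c1 : fC (1/2) = 1/2 := by unfold fC; norm_num
    have c2 : fC (-(1/2)) = 1/2 := by unfold fC; norm_num
    have c3 : fC (Complex.I * r / 2) = -(1/2) := by
      unfold fC
      linear_combination (r^2/4) * hI - (1/4) * hr
    have c4 : fC (-(Complex.I * r / 2)) = -(1/2) := by
      unfold fC
      linear_combination (r^2/4) * hI - (1/4) * hr
    have c5 : fC (1/2 + Complex.I) = -(1/2) + Complex.I := by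
      unfold fC; linear_combination hI
    have c6 : fC (1/2 - Complex.I) = -(1/2) - Complex.I := by
      unfold fC; linear_combination hI
    have c7 : fC (-(1/2) + Complex.I) = -(1/2) - Complex.I := by
      unfold fC; linear_combination hI
    have c8 : fC (-(1/2) - Complex.I) = -(1/2) + Complex.I := by
      unfold fC; linear_combination hI
    simp only [Set.mem_insert_iff, Set.mem_singleton_iff] at hmem
    refine ⟨3, 5, by norm_num, Subtype.coe_injective ?_⟩
    show (((fun z : ↥K => z ^ 2 + 1 / 4)^[3] x : ↥K) : ℂ) =
      (((fun z : ↥K => z ^ 2 + 1 / 4)^[5] x : ↥K) : ℂ)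
    rw [coe_iter, coe_iter]
    rcases hmem with hv | hv | hv | hv | hv | hv | hv | hv <;>
      rw [hv] <;>
      simp only [show (3:ℕ) = 1+1+1 from rfl, show (5:ℕ) = 1+1+1+1+1 from rfl,
        Function.iterate_succ_apply', Function.iterate_one, Function.iterate_zero_apply, c1, c2, c3, c4, c5, c6, c7, c8]
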